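/- The polynomial p(x_1,x_2) = x_1^3 + 3x_1x_2 + x_2^3 satisfies p(x) = 1 whenever x_1 + x_2 = 1, has all positive coefficients, degree 3, and exactly 3 = 2·3 - 3 monomials, achieving equality in the two-dimensional sharp bound deg p ≤ 2N(p) - 3. -/

import Mathlib

open MvPolynomial

theorem stmt_9 (p : MvPolynomial (Fin 2) ℝ)
    (hp : p = (X 0) ^ 3 + 3 * (X 0) * (X 1) + (X 1) ^ 3) :
    (∀ x : Fin 2 → ℝ, x 0 + x 1 = 1 → eval x p = 1) ∧
    (∀ m ∈ p.support, 0 < p.coeff m) ∧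
    p.totalDegree = 3 ∧
    p.support.card = 3 ∧
    p.totalDegree = 2 * p.support.card - 3 := by
  set a : Fin 2 →₀ ℕ := Finsupp.single 0 3 with ha
  set b : Fin 2 →₀ ℕ := Finsupp.single 0 1 + Finsupp.single 1 1 with hb
  set c : Fin 2 →₀ ℕ := Finsupp.single 1 3 with hc
  have hab : a ≠ b := by
    intro h; have := DFunLike.congr_fun h 0; simp [ha, hb, Finsupp.single_apply] at this
  have hac : a ≠ c := by
    intro h; have := DFunLike.congr_fun h 0; simp [ha, hc, Finsupp.single_apply] at this
  have hbc : b ≠ c := by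
    intro h; have := DFunLike.congr_fun h 0; simp [ha, hb, hc, Finsupp.single_apply] at this
  have hmon : p = monomial a 1 + monomial b 3 + monomial c 1 := by
    rw [hp, X_pow_eq_monomial, X_pow_eq_monomial, mul_assoc,
      show (X 0 * X 1 : MvPolynomial (Fin 2) ℝ) = monomial b 1 by
        rw [X, X, monomial_mul, one_mul, hb],
      show (3 : MvPolynomial (Fin 2) ℝ) = C 3 from (map_ofNat C 3).symm, C_mul_monomial, mul_one, ha, hc]
  have hcoeff : ∀ m, coeff m p = if m = a then 1 else if m = b then 3 else if m = c then 1 else 0 := by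
    intro m
    rw [hmon]
    simp only [coeff_add, coeff_monomial]
    by_cases h1 : m = a
    · subst h1
      rw [if_pos rfl, if_neg hab.symm, if_neg hac.symm, if_pos rfl]; norm_num
    by_cases h2 : m = b
    · subst h2
      rw [if_neg hab, if_pos rfl, if_neg hbc.symm, if_neg h1, if_pos rfl]; norm_num
    by_cases h3 : m = c
    · subst h3
      rw [if_neg hac, if_neg hbc, if_pos rfl, if_neg h1, if_neg h2]; norm_num
    · rw [if_neg (fun h => h1 h.symm), if_neg (fun h => h2 h.symm), if_neg (fun h => h3 h.symm),
        if_neg h1, if_neg h2, if_neg h3]; norm_num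
  have hsupp : p.support = {a, b, c} := by
    ext m
    simp only [mem_support_iff, hcoeff, Finset.mem_insert, Finset.mem_singleton]
    by_cases h1 : m = a
    · simp [h1]
    by_cases h2 : m = b
    · simp [h1, h2, Ne.symm hab]
    by_cases h3 : m = c
    · simp [h1, h2, h3, Ne.symm hac, Ne.symm hbc]
    · simp [h1, h2, h3]
  have hadeg : (a.sum fun _ e => e) = 3 := by simp [ha]
  have hbdeg : (b.sum fun _ e => e) = 2 := by
    rw [hb, Finsupp.sum_add_index (by simp) (by simp)]; simp
  have hcdeg : (c.sum fun _ e => e) = 3 := by simp [hc]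
  have hcard : ({a, b, c} : Finset (Fin 2 →₀ ℕ)).card = 3 := by
    rw [Finset.card_insert_of_notMem (by simp [hab, hac]),
      Finset.card_insert_of_notMem (by simp [hbc]), Finset.card_singleton]
  have hdeg : p.totalDegree = 3 := by
    rw [totalDegree, hsupp, Finset.sup_insert, Finset.sup_insert, Finset.sup_singleton,
      hadeg, hbdeg, hcdeg]
    decide
  refine ⟨?_, ?_, hdeg, by rw [hsupp, hcard], by rw [hdeg, hsupp, hcard]⟩
  · intro x hx
    rw [hp]
    simp only [map_add, map_mul, map_pow, eval_X, map_ofNat]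
    have h1 : x 1 = 1 - x 0 := by linarith
    rw [h1]; ring
  · intro m hm
    rw [mem_support_iff] at hm
    rw [hcoeff] at hm ⊢
    split_ifs at hm ⊢ <;> simp_all
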